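/- If a group G has an abelian normal subgroup A of finite index, then the group algebra F[G] over any field F satisfies a polynomial identity. -/

import Mathlib

open Finset


theorem aux_alt_vanish {C S : Type*} [CommRing C] [Ring S] [Algebra C S]
    {ι : Type*} [Fintype ι] (v : ι → S)
    (hv : ∀ s : S, s ∈ Submodule.span C (Set.range v))
    {m : ℕ} (hm : Fintype.card ι < m) (x : Fin m → S) :
    ∑ σ : Equiv.Perm (Fin m), (Equiv.Perm.sign σ : ℤ) • (List.ofFn fun i => x (σ i)).prod
      = 0 := by
  classical
  set Φ := MultilinearMap.alternatization (MultilinearMap.mkPiAlgebraFin C m S) with hΦ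
  have key : Φ x = ∑ σ : Equiv.Perm (Fin m),
      (Equiv.Perm.sign σ : ℤ) • (List.ofFn fun i => x (σ i)).prod := by
    rw [hΦ, MultilinearMap.alternatization_apply]
    refine Finset.sum_congr rfl fun σ _ => ?_
    simp only [Units.smul_def, MultilinearMap.domDomCongr_apply,
      MultilinearMap.mkPiAlgebraFin_apply, Function.comp]
  rw [← key]
  choose c hc using fun i => (Submodule.mem_span_range_iff_exists_fun C).mp (hv (x i))
  have hx : x = fun i => ∑ j : ι, c i j • v j := funext fun i => (hc i).symm
  rw [hx]
  have h1 : Φ (fun i => ∑ j : ι, c i j • v j)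
      = ∑ r ∈ Fintype.piFinset (fun _ : Fin m => (Finset.univ : Finset ι)),
          Φ (fun i => c i (r i) • v (r i)) :=
    Φ.toMultilinearMap.map_sum (fun i j => c i j • v j)
  rw [h1]
  refine Finset.sum_eq_zero fun r _ => ?_
  have h2 : Φ (fun i => c i (r i) • v (r i))
      = (∏ i, c i (r i)) • Φ (fun i => v (r i)) :=
    Φ.toMultilinearMap.map_smul_univ (fun i => c i (r i)) (fun i => v (r i))
  rw [h2]
  obtain ⟨a, b, hab, hr⟩ := Fintype.exists_ne_map_eq_of_card_lt r (by simpa using hm)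
  rw [Φ.map_eq_zero_of_eq (fun i => v (r i)) (congrArg v hr) hab, smul_zero]

theorem aux_word (α : Type*) : ∀ l : List α,
    (l.map FreeMonoid.of).prod = FreeMonoid.ofList l := by
  intro l
  induction l with
  | nil => rfl
  | cons a t ih =>
      rw [List.map_cons, List.prod_cons, ih]
      rfl

theorem aux_std_ne_zero (F : Type*) [Field F] (m : ℕ) :
    (∑ σ : Equiv.Perm (Fin m),
        (Equiv.Perm.sign σ : ℤ) • (List.ofFn fun i => FreeAlgebra.ι F (σ i)).prod
      : FreeAlgebra F (Fin m)) ≠ 0 := by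
  classical
  intro h
  have h2 := congrArg (fun z => ((FreeAlgebra.equivMonoidAlgebraFreeMonoid (R := F) (X := Fin m))) z) h
  rw [map_sum, map_zero] at h2
  -- compute the image of each monomial
  have hterm : ∀ σ : Equiv.Perm (Fin m),
      ((FreeAlgebra.equivMonoidAlgebraFreeMonoid (R := F) (X := Fin m)))
        ((Equiv.Perm.sign σ : ℤ) • (List.ofFn fun i => FreeAlgebra.ι F (σ i)).prod)
      = (Equiv.Perm.sign σ : ℤ) •
          MonoidAlgebra.single (FreeMonoid.ofList (List.ofFn σ)) (1 : F) := by
    intro σ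
    rw [map_zsmul]
    congr 1
    rw [map_list_prod, List.map_ofFn]
    have h3 : ∀ i : Fin m,
        ((FreeAlgebra.equivMonoidAlgebraFreeMonoid (R := F) (X := Fin m))) (FreeAlgebra.ι F (σ i))
        = MonoidAlgebra.of F (FreeMonoid (Fin m)) (FreeMonoid.of (σ i)) := by
      intro i
      simp [FreeAlgebra.equivMonoidAlgebraFreeMonoid]
    calc (List.ofFn (((FreeAlgebra.equivMonoidAlgebraFreeMonoid (R := F) (X := Fin m))) ∘
            fun i => FreeAlgebra.ι F (σ i))).prod
        = (List.ofFn fun i => MonoidAlgebra.of F (FreeMonoid (Fin m))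
            (FreeMonoid.of (σ i))).prod := by
          exact congrArg List.prod (congrArg List.ofFn (funext fun i => h3 i))
      _ = ((List.ofFn fun i => FreeMonoid.of (σ i)).map
            (MonoidAlgebra.of F (FreeMonoid (Fin m)))).prod := by
          rw [List.map_ofFn]; rfl
      _ = MonoidAlgebra.of F (FreeMonoid (Fin m))
            (List.ofFn fun i => FreeMonoid.of (σ i)).prod := by
          rw [map_list_prod]
      _ = MonoidAlgebra.single ((List.ofFn fun i => FreeMonoid.of (σ i)).prod) 1 := rfl
      _ = MonoidAlgebra.single (FreeMonoid.ofList (List.ofFn σ)) 1 := by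
          congr 1
          have := aux_word (Fin m) (List.ofFn σ)
          rw [← this, List.map_ofFn]
          rfl
  rw [Finset.sum_congr rfl (fun σ _ => hterm σ)] at h2
  -- evaluate at the identity word
  have h4 := congrArg (fun q : MonoidAlgebra F (FreeMonoid (Fin m)) =>
    q.coeff (FreeMonoid.ofList (List.ofFn (1 : Equiv.Perm (Fin m))))) h2
  simp only [MonoidAlgebra.coeff_sum, MonoidAlgebra.coeff_zero, Finsupp.coe_zero, Pi.zero_apply] at h4
  rw [Finset.sum_apply'] at h4
  have h5 : ∀ σ : Equiv.Perm (Fin m),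
      ((Equiv.Perm.sign σ : ℤ) •
          MonoidAlgebra.single (FreeMonoid.ofList (List.ofFn σ)) (1 : F)).coeff
        (FreeMonoid.ofList (List.ofFn (1 : Equiv.Perm (Fin m))))
      = if σ = 1 then (Equiv.Perm.sign σ : ℤ) • (1 : F) else 0 := by
    intro σ
    rw [MonoidAlgebra.coeff_smul, MonoidAlgebra.coeff_single, Finsupp.smul_apply, Finsupp.single_apply]
    by_cases hσ : σ = 1
    · subst hσ; simp
    · rw [if_neg hσ, if_neg, smul_zero]
      intro hw
      apply hσ
      have : List.ofFn (⇑σ) = List.ofFn (⇑(1 : Equiv.Perm (Fin m))) := by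
        have := FreeMonoid.toList_ofList (List.ofFn (⇑σ)) ▸ congrArg FreeMonoid.toList hw
        simpa using congrArg FreeMonoid.toList hw
      have hfun : ⇑σ = ⇑(1 : Equiv.Perm (Fin m)) := by
        have h6 := List.ofFn_inj.mp this
        exact h6
      exact Equiv.coe_fn_injective hfun
  rw [Finset.sum_congr rfl (fun σ _ => h5 σ)] at h4
  rw [Finset.sum_ite_eq' Finset.univ (1 : Equiv.Perm (Fin m))] at h4
  simp at h4

noncomputable def cosetEquiv {G : Type*} [Group G] (A : Subgroup G) :
    G ≃ (G ⧸ A) × A where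
  toFun g := (QuotientGroup.mk g,
    ⟨(Quotient.out (QuotientGroup.mk g : G ⧸ A))⁻¹ * g, by
      rw [← QuotientGroup.eq]
      exact Quotient.out_eq' _⟩)
  invFun p := Quotient.out p.1 * (p.2 : G)
  left_inv g := by group
  right_inv p := by
    rcases p with ⟨q, a⟩
    have h1 : (QuotientGroup.mk (Quotient.out q * (a : G)) : G ⧸ A) = q := by
      rw [QuotientGroup.mk_mul_of_mem _ a.2]
      exact Quotient.out_eq' q
    refine Prod.ext h1 (Subtype.ext ?_)
    simp only [h1]
    group

theorem cosetEquiv_fst {G : Type*} [Group G] (A : Subgroup G) (g : G) :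
    (cosetEquiv A g).1 = QuotientGroup.mk g := rfl

theorem aux_curry_single {α β M R : Type*} [Semiring R] [AddCommMonoid M] [Module R M]
    (p : α × β) (m : M) :
    Finsupp.finsuppProdLEquiv R (Finsupp.single p m)
      = Finsupp.single p.1 (Finsupp.single p.2 m) := by
  classical
  ext a b
  rw [show Finsupp.finsuppProdLEquiv R (Finsupp.single p m) a b = Finsupp.single p m (a, b) from rfl]
  simp [Finsupp.single_apply, Prod.ext_iff, ite_and, apply_ite (fun f : β →₀ M => f b)]

set_option maxHeartbeats 400000 in
theorem aux_main (F : Type*) [Field F] (G : Type*) [Group G] (A : Subgroup G)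
    (hAab : ∀ a b : A, a * b = b * a) (hfin : A.FiniteIndex) :
    ∃ m : ℕ, ∀ x : Fin m → MonoidAlgebra F G,
      ∑ σ : Equiv.Perm (Fin m), (Equiv.Perm.sign σ : ℤ) •
        (List.ofFn fun i => x (σ i)).prod = 0 := by
  classical
  letI : CommGroup A := { (inferInstance : Group A) with mul_comm := hAab }
  let C := MonoidAlgebra F A
  let R := MonoidAlgebra F G
  let i : C →+* R := MonoidAlgebra.mapDomainRingHom F A.subtype
  have hcomm : ∀ x y : C, Commute (i x) (i y) := fun x y => by
    unfold Commute SemiconjBy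
    rw [← map_mul, ← map_mul, mul_comm]
  letI : Module C R := Module.compHom R (i.toOpposite hcomm)
  have hsmul : ∀ (c : C) (x : R), c • x = x * i c := fun c x =>
    rfl
  have hisingle : ∀ (a : A) (k : F),
      i (MonoidAlgebra.single a k) = MonoidAlgebra.single (a : G) k :=
    fun a k => MonoidAlgebra.mapDomain_single
  let e := cosetEquiv A
  let T : R ≃ₗ[F] ((G ⧸ A) →₀ C) :=
    (((MonoidAlgebra.coeffLinearEquiv F).trans (Finsupp.domLCongr e)).trans
      (Finsupp.finsuppProdLEquiv F)).trans
      (Finsupp.mapRange.linearEquiv (MonoidAlgebra.coeffLinearEquiv F).symm)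
  have Tsingle : ∀ (g : G) (s : F),
      T (MonoidAlgebra.single g s) = Finsupp.single (e g).1 (MonoidAlgebra.single (e g).2 s) := by
    intro g s
    show Finsupp.mapRange.linearEquiv (MonoidAlgebra.coeffLinearEquiv F).symm
      (Finsupp.finsuppProdLEquiv F ((Finsupp.domLCongr e : (G →₀ F) ≃ₗ[F] ((G ⧸ A) × A →₀ F))
        (Finsupp.single g s))) = _
    rw [Finsupp.domLCongr_single, aux_curry_single]
    simp
  have hT : ∀ (c : C) (x : R), (T (c • x) : (G ⧸ A) →₀ C) = c • (T x : (G ⧸ A) →₀ C) := by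
    intro c x
    induction x using MonoidAlgebra.induction_linear with
    | zero => rw [smul_zero, map_zero, smul_zero]
    | add f g hf hg => rw [smul_add, map_add, hf, hg, map_add, smul_add]
    | single g s =>
      induction c using MonoidAlgebra.induction_linear with
      | zero => rw [zero_smul, map_zero, zero_smul]
      | add c1 c2 h1 h2 => rw [add_smul, map_add, h1, h2, add_smul]
      | single a k =>
        rw [hsmul, hisingle, MonoidAlgebra.single_mul_single (R := F) (M := G),
          Tsingle, Tsingle]
        have h1 : (e (g * (a : G))).1 = (e g).1 := QuotientGroup.mk_mul_of_mem g a.2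
        have hout : Quotient.out ((QuotientGroup.mk (g * (a : G))) : G ⧸ A)
            = Quotient.out ((QuotientGroup.mk g) : G ⧸ A) :=
          congrArg Quotient.out (QuotientGroup.mk_mul_of_mem g a.2)
        have h2 : (e (g * (a : G))).2 = a * (e g).2 := by
          apply Subtype.ext
          show (Quotient.out ((QuotientGroup.mk (g * (a : G))) : G ⧸ A))⁻¹ * (g * (a : G))
            = (a : G) * ((Quotient.out ((QuotientGroup.mk g) : G ⧸ A))⁻¹ * g)
          rw [hout, ← mul_assoc]
          exact congrArg (Subtype.val) (hAab (e g).2 a)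
        rw [h1, h2]
        ext q
        rw [Finsupp.smul_apply, Finsupp.single_apply, Finsupp.single_apply]
        by_cases hq : (e g).1 = q
        · rw [if_pos hq, if_pos hq, smul_eq_mul,
            MonoidAlgebra.single_mul_single (R := F) (M := ↥A), mul_comm s k]
        · rw [if_neg hq, if_neg hq, smul_zero]
  let Trepr : R ≃ₗ[C] ((G ⧸ A) →₀ C) :=
    { toFun := fun x => T x
      invFun := fun y => T.symm y
      left_inv := fun x => T.symm_apply_apply x
      right_inv := fun y => T.apply_symm_apply y
      map_add' := fun x y => T.map_add x y
      map_smul' := hT }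
  let b : Module.Basis (G ⧸ A) C R := Module.Basis.ofRepr Trepr
  haveI := hfin
  haveI : Finite (G ⧸ A) := A.finite_quotient_of_finiteIndex
  haveI : Fintype (G ⧸ A) := Fintype.ofFinite _
  let n := Fintype.card (G ⧸ A)
  refine ⟨n * n + 1, ?_⟩
  intro x
  let Ψ : Module.End C R ≃ₐ[C] Matrix (G ⧸ A) (G ⧸ A) C := algEquivMatrix b
  let L : R →+* Module.End C R :=
    { toFun := fun r =>
        { toFun := fun z => r * z
          map_add' := fun z w => mul_add r z w
          map_smul' := fun c z => by
            simp only [RingHom.id_apply]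
            rw [hsmul, hsmul, mul_assoc] }
      map_one' := by apply LinearMap.ext; intro z; exact one_mul z
      map_mul' := fun r s => by apply LinearMap.ext; intro z; exact mul_assoc r s z
      map_zero' := by apply LinearMap.ext; intro z; exact zero_mul z
      map_add' := fun r s => by apply LinearMap.ext; intro z; exact add_mul r s z }
  have hL : Function.Injective L := by
    intro r s h
    have h2 := congrArg (fun φ : Module.End C R => φ 1) h
    simpa [L] using h2
  let ρ : R →+* Matrix (G ⧸ A) (G ⧸ A) C := RingHom.comp Ψ.toAlgHom.toRingHom L
  have hρ : Function.Injective ρ := Ψ.injective.comp hL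
  apply hρ
  rw [map_zero, map_sum]
  have hterm : ∀ σ : Equiv.Perm (Fin (n * n + 1)),
      ρ ((Equiv.Perm.sign σ : ℤ) • (List.ofFn fun i => x (σ i)).prod)
        = (Equiv.Perm.sign σ : ℤ) • (List.ofFn fun i => ρ (x (σ i))).prod := by
    intro σ
    rw [map_zsmul]
    congr 1
    rw [map_list_prod, List.map_ofFn]
    rfl
  have hv := fun s => (Matrix.stdBasis C (G ⧸ A) (G ⧸ A)).mem_span s
  have hcard : Fintype.card ((G ⧸ A) × (G ⧸ A)) < n * n + 1 := by
    rw [Fintype.card_prod]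
    exact Nat.lt_succ_self _
  have h9 : ∑ σ : Equiv.Perm (Fin (n * n + 1)), (Equiv.Perm.sign σ : ℤ) •
      (List.ofFn fun i => ρ (x (σ i))).prod = 0 :=
    aux_alt_vanish (fun pr : (G ⧸ A) × (G ⧸ A) => Matrix.stdBasis C (G ⧸ A) (G ⧸ A) pr)
      hv hcard (fun j => ρ (x j))
  exact (Finset.sum_congr rfl fun σ _ => hterm σ).trans h9


/-- If a group `G` has an abelian normal subgroup of finite index, then for any
field `F` the group algebra `F[G]` satisfies a polynomial identity (there is a
nonzero element of a free algebra annihilated by every `F`-algebra map into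
`F[G]`). -/
theorem group_algebra_pi_of_abelian_by_finite (F : Type*) [Field F]
    (G : Type*) [Group G] (A : Subgroup G) (hA : A.Normal)
    (hAab : ∀ a b : A, a * b = b * a) (hfin : A.FiniteIndex) :
    ∃ (m : ℕ) (p : FreeAlgebra F (Fin m)), p ≠ 0 ∧
      ∀ f : FreeAlgebra F (Fin m) →ₐ[F] MonoidAlgebra F G, f p = 0 := by
  obtain ⟨m, hm⟩ := aux_main F G A hAab hfin
  refine ⟨m, ∑ σ : Equiv.Perm (Fin m), (Equiv.Perm.sign σ : ℤ) •
      (List.ofFn fun i => FreeAlgebra.ι F (σ i)).prod, aux_std_ne_zero F m, ?_⟩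
  intro f
  rw [map_sum]
  have hterm : ∀ σ : Equiv.Perm (Fin m),
      f ((Equiv.Perm.sign σ : ℤ) • (List.ofFn fun i => FreeAlgebra.ι F (σ i)).prod)
        = (Equiv.Perm.sign σ : ℤ) • (List.ofFn fun i => f (FreeAlgebra.ι F (σ i))).prod := by
    intro σ
    rw [map_zsmul]
    congr 1
    rw [map_list_prod, List.map_ofFn]
    rfl
  rw [Finset.sum_congr rfl fun σ _ => hterm σ]
  exact hm (fun i => f (FreeAlgebra.ι F i))
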